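/- Let 2 ≤ k ≤ n and let β_0,…,β_{k−2} be nonnegative real numbers. Let μ = (μ_1,…,μ_{n−1}) ∈ ℝ^{n−1} be such that σ_{k−2}(μ) > 0 and (μ_1,…,μ_{n−1},t) ∈ Γ_{k−1} ⊂ ℝ^n for all sufficiently large t ∈ ℝ. Then lim_{t→+∞} f(μ_1,…,μ_{n−1},t) = σ_{k−1}(μ)/σ_{k−2}(μ) − Σ_{l=1}^{k−2} β_l σ_{l−1}(μ)/σ_{k−2}(μ), where on the right-hand side σ_j denotes the j-th elementary symmetric function of the n−1 variables μ_1,…,μ_{n−1}. -/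

import Mathlib

open Finset

/-- The `k`-th elementary symmetric function of `lam : Fin n → ℝ`. -/
noncomputable def esymm (n k : ℕ) (lam : Fin n → ℝ) : ℝ :=
  ∑ s ∈ Finset.powersetCard k (Finset.univ : Finset (Fin n)), ∏ i ∈ s, lam i

/-- The Gårding cone `Γ_k ⊆ ℝ^n`. -/
def GammaCone (n k : ℕ) : Set (Fin n → ℝ) :=
  {lam | ∀ i : ℕ, 1 ≤ i → i ≤ k → 0 < esymm n i lam}

/-- The mixed Hessian operator
`f(λ) = σ_k(λ)/σ_{k-1}(λ) - ∑_{l=0}^{k-2} β_l σ_l(λ)/σ_{k-1}(λ)`. -/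
noncomputable def fmix (n k : ℕ) (β : ℕ → ℝ) (lam : Fin n → ℝ) : ℝ :=
  esymm n k lam / esymm n (k-1) lam
    - ∑ l ∈ Finset.range (k-1), β l * (esymm n l lam / esymm n (k-1) lam)

lemma esymm_zero' (n : ℕ) (lam : Fin n → ℝ) : esymm n 0 lam = 1 := by
  simp [esymm]

lemma univ_fin_succ (m : ℕ) :
    (Finset.univ : Finset (Fin (m+1))) = insert (Fin.last m) (Finset.univ.map Fin.castSuccEmb) := by
  ext i
  simp only [mem_univ, true_iff, mem_insert, mem_map, Fin.coe_castSuccEmb]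
  rcases Fin.eq_castSucc_or_eq_last i with ⟨j, rfl⟩ | rfl
  · exact Or.inr ⟨j, by simp⟩
  · exact Or.inl rfl

lemma esymm_snoc (m j : ℕ) (mu : Fin m → ℝ) (t : ℝ) :
    esymm (m+1) (j+1) (Fin.snoc mu t) = esymm m (j+1) mu + t * esymm m j mu := by
  classical
  have hnot : Fin.last m ∉ Finset.univ.map (Fin.castSuccEmb (n := m)) := by
    simp only [mem_map, Fin.coe_castSuccEmb, mem_univ, true_and]
    rintro ⟨j, hj⟩
    exact (Fin.castSucc_lt_last j).ne hj
  unfold esymm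
  rw [univ_fin_succ, powersetCard_succ_insert hnot]
  have hdisj : Disjoint (powersetCard (j+1) (Finset.univ.map (Fin.castSuccEmb (n := m))))
      ((powersetCard j (Finset.univ.map (Fin.castSuccEmb (n := m)))).image (insert (Fin.last m))) := by
    rw [disjoint_left]
    intro s hs hs'
    rw [mem_powersetCard] at hs
    rw [mem_image] at hs'
    obtain ⟨u, hu, rfl⟩ := hs'
    exact hnot (hs.1 (mem_insert_self _ _))
  rw [sum_union hdisj]
  congr 1
  · rw [powersetCard_map, sum_map]
    apply sum_congr rfl
    intro s _
    simp only [RelEmbedding.coe_toEmbedding, mapEmbedding_apply]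
    rw [Finset.prod_map]
    refine Finset.prod_congr rfl fun x _ => ?_
    simp only [Fin.coe_castSuccEmb, Fin.snoc_castSucc]
  · rw [sum_image, powersetCard_map, sum_map]
    · rw [Finset.mul_sum]
      apply sum_congr rfl
      intro s _
      simp only [RelEmbedding.coe_toEmbedding, mapEmbedding_apply]
      have hns : Fin.last m ∉ s.map Fin.castSuccEmb := by
        simp only [mem_map, Fin.coe_castSuccEmb]
        rintro ⟨j, _, hj⟩
        exact (Fin.castSucc_lt_last j).ne hj
      rw [prod_insert hns, Finset.prod_map, Fin.snoc_last]
      congr 1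
      refine Finset.prod_congr rfl fun x _ => ?_
      simp only [Fin.coe_castSuccEmb, Fin.snoc_castSucc]
    · intro u hu v hv huv
      rw [Finset.mem_coe, mem_powersetCard] at hu hv
      have hu0 : Fin.last m ∉ u := fun h => hnot (hu.1 h)
      have hv0 : Fin.last m ∉ v := fun h => hnot (hv.1 h)
      rw [← erase_insert hu0, ← erase_insert hv0, huv]

lemma div_div_div' (x y t : ℝ) (ht : t ≠ 0) : (x/t)/(y/t) = x/y := by
  rcases eq_or_ne y 0 with hy | hy
  · simp [hy]
  · field_simp

lemma tendsto_ratio (a b c d : ℝ) (hd : d ≠ 0) :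
    Filter.Tendsto (fun t : ℝ => (a + t*b)/(c + t*d)) Filter.atTop (nhds (b/d)) := by
  have h0 : ∀ e : ℝ, Filter.Tendsto (fun t : ℝ => e/t) Filter.atTop (nhds 0) := by
    intro e
    simpa using (tendsto_inv_atTop_zero.const_mul e).congr (fun t => by rw [div_eq_mul_inv])
  have h1 : Filter.Tendsto (fun t : ℝ => (a/t + b)/(c/t + d)) Filter.atTop (nhds (b/d)) := by
    have hnum : Filter.Tendsto (fun t : ℝ => a/t + b) Filter.atTop (nhds b) := by
      simpa using (h0 a).add tendsto_const_nhds
    have hden : Filter.Tendsto (fun t : ℝ => c/t + d) Filter.atTop (nhds d) := by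
      simpa using (h0 c).add tendsto_const_nhds
    exact hnum.div hden hd
  apply h1.congr'
  filter_upwards [Filter.eventually_gt_atTop (0:ℝ)] with t ht
  have h2 : a/t + b = (a + t*b)/t := by field_simp
  have h3 : c/t + d = (c + t*d)/t := by field_simp
  rw [h2, h3, div_div_div' _ _ _ ht.ne']

/-- Limit of the mixed Hessian operator as the last variable tends to `+∞`:
`lim_{t→∞} f(μ₁,…,μ_{n-1},t) = σ_{k-1}(μ)/σ_{k-2}(μ) - ∑_{l=1}^{k-2} β_l σ_{l-1}(μ)/σ_{k-2}(μ)`. -/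
theorem fmix_tendsto_at_infinity (m k : ℕ) (hk2 : 2 ≤ k) (hkn : k ≤ m + 1)
    (β : ℕ → ℝ) (hβ : ∀ l, l ≤ k - 2 → 0 ≤ β l)
    (mu : Fin m → ℝ) (hmu : 0 < esymm m (k-2) mu)
    (hG : ∃ T : ℝ, ∀ t ≥ T, Fin.snoc mu t ∈ GammaCone (m+1) (k-1)) :
    Filter.Tendsto (fun t : ℝ => fmix (m+1) k β (Fin.snoc mu t)) Filter.atTop
      (nhds (esymm m (k-1) mu / esymm m (k-2) mu
        - ∑ l ∈ Finset.Icc 1 (k-2), β l * (esymm m (l-1) mu / esymm m (k-2) mu))) := by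
  obtain ⟨j, rfl⟩ := Nat.exists_eq_add_of_le hk2
  have h1 : 2 + j - 1 = j + 1 := by omega
  have h2 : 2 + j - 2 = j := by omega
  rw [h2] at hmu
  have hd : esymm m j mu ≠ 0 := ne_of_gt hmu
  set c := esymm m (j+1) mu with hc
  set d := esymm m j mu with hdd
  -- the limit for each term in the sum
  set L : ℕ → ℝ := fun l => if l = 0 then 0 else β l * (esymm m (l-1) mu / d) with hL
  have hmain : Filter.Tendsto (fun t : ℝ =>
      esymm (m+1) (2+j) (Fin.snoc mu t) / esymm (m+1) (j+1) (Fin.snoc mu t))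
      Filter.atTop (nhds (c / d)) := by
    apply (tendsto_ratio (esymm m (2+j) mu) c c d hd).congr
    intro t
    rw [show 2+j = (j+1)+1 from by omega, esymm_snoc, esymm_snoc]
  have hsum : Filter.Tendsto (fun t : ℝ =>
      ∑ l ∈ Finset.range (j+1), β l * (esymm (m+1) l (Fin.snoc mu t) / esymm (m+1) (j+1) (Fin.snoc mu t)))
      Filter.atTop (nhds (∑ l ∈ Finset.range (j+1), L l)) := by
    apply tendsto_finset_sum
    intro l _
    rcases l with _ | i
    · have := (tendsto_ratio 1 0 c d hd).const_mul (β 0)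
      simp only [hL, if_pos rfl]
      have h00 : β 0 * ((0:ℝ)/d) = 0 := by simp
      rw [show (0:ℝ) = β 0 * ((0:ℝ)/d) from h00.symm]
      apply this.congr
      intro t
      rw [esymm_snoc, esymm_zero', mul_zero, add_zero]
    · have := (tendsto_ratio (esymm m (i+1) mu) (esymm m i mu) c d hd).const_mul (β (i+1))
      simp only [hL, Nat.succ_ne_zero, if_neg, Nat.add_sub_cancel]
      apply this.congr
      intro t
      rw [esymm_snoc, esymm_snoc]
  have hfinal := hmain.sub hsum
  have heq : (fun t : ℝ => fmix (m+1) (2+j) β (Fin.snoc mu t)) = fun t : ℝ =>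
      esymm (m+1) (2+j) (Fin.snoc mu t) / esymm (m+1) (j+1) (Fin.snoc mu t)
      - ∑ l ∈ Finset.range (j+1), β l * (esymm (m+1) l (Fin.snoc mu t) / esymm (m+1) (j+1) (Fin.snoc mu t)) := by
    funext t
    simp [fmix, h1]
  rw [heq]
  have hr : Finset.range (j+1) = insert 0 (Finset.Icc 1 j) := by
    ext x
    simp only [Finset.mem_range, Finset.mem_insert, Finset.mem_Icc]
    omega
  have hsum_eq : ∑ l ∈ Finset.Icc 1 j, β l * (esymm m (l-1) mu / esymm m j mu)
      = ∑ l ∈ Finset.range (j+1), L l := by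
    rw [hr, Finset.sum_insert (by simp)]
    have hL0 : L 0 = 0 := by simp [hL]
    rw [hL0, zero_add]
    apply Finset.sum_congr rfl
    intro l hl
    rw [Finset.mem_Icc] at hl
    simp only [hL]
    rw [if_neg (by omega)]
  rw [h1, h2, hsum_eq]
  exact hfinal
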